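/- Let A ∈ ℝ^{n×n} with singular value decomposition A = U diag(σ_1,...,σ_n) V^T and let τ > 0. The singular value thresholding operator Θ_τ(A) = U diag(max(σ_1 − τ, 0),...,max(σ_n − τ, 0)) V^T is the unique minimizer of B ↦ τ‖B‖_* + (1/2)‖A − B‖_F^2 over B ∈ ℝ^{n×n}. -/

import Mathlib

open Matrix

section SVTHelpers

variable {n : ℕ}

lemma conj_transpose_real' (B : Matrix (Fin n) (Fin n) ℝ) : Bᴴ = Bᵀ :=
  conjTranspose_eq_transpose_of_trivial B

lemma dot_self_nonneg' (x : Fin n → ℝ) : 0 ≤ x ⬝ᵥ x :=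
  Finset.sum_nonneg fun _ _ => mul_self_nonneg _

lemma dot_le_sqrt' (x y : Fin n → ℝ) :
    x ⬝ᵥ y ≤ Real.sqrt (x ⬝ᵥ x) * Real.sqrt (y ⬝ᵥ y) := by
  rcases le_or_gt (x ⬝ᵥ y) 0 with hneg | hpos
  · exact hneg.trans (mul_nonneg (Real.sqrt_nonneg _) (Real.sqrt_nonneg _))
  · rw [← Real.sqrt_mul (dot_self_nonneg' x)]
    rw [show (x ⬝ᵥ y) = Real.sqrt ((x ⬝ᵥ y)^2) by rw [Real.sqrt_sq hpos.le]]
    apply Real.sqrt_le_sqrt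
    simpa [dotProduct, sq] using Finset.sum_mul_sq_le_sq_mul_sq Finset.univ x y

lemma dot_mulVec_self' (M : Matrix (Fin n) (Fin n) ℝ) (x : Fin n → ℝ) :
    (M *ᵥ x) ⬝ᵥ (M *ᵥ x) = x ⬝ᵥ ((Mᵀ * M) *ᵥ x) := by
  conv_rhs => rw [← mulVec_mulVec, dotProduct_mulVec, vecMul_transpose]

lemma dot_mulVec_orth' {M : Matrix (Fin n) (Fin n) ℝ} (hM : Mᵀ * M = 1) (x : Fin n → ℝ) :
    (M *ᵥ x) ⬝ᵥ (M *ᵥ x) = x ⬝ᵥ x := by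
  rw [dot_mulVec_self', hM, one_mulVec]

lemma ip_symm' (X Y : Matrix (Fin n) (Fin n) ℝ) :
    trace (Yᵀ * X) = trace (Xᵀ * Y) := by
  rw [← trace_transpose, transpose_mul, transpose_transpose]

lemma trace_expand' (X Y : Matrix (Fin n) (Fin n) ℝ) :
    trace ((X + Y)ᵀ * (X + Y)) =
      trace (Xᵀ * X) + 2 * trace (Xᵀ * Y) + trace (Yᵀ * Y) := by
  simp only [transpose_add, add_mul, mul_add, trace_add]
  rw [ip_symm' X Y]; ring

lemma trace_form' (X : Matrix (Fin n) (Fin n) ℝ) :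
    trace (Xᵀ * X) = ∑ i, ∑ j, (X j i)^2 := by
  simp [trace, mul_apply, diag, sq]

lemma trace_form_nonneg' (X : Matrix (Fin n) (Fin n) ℝ) : 0 ≤ trace (Xᵀ * X) := by
  rw [trace_form']
  exact Finset.sum_nonneg fun i _ => Finset.sum_nonneg fun j _ => sq_nonneg _

lemma trace_form_eq_zero' {X : Matrix (Fin n) (Fin n) ℝ} (h : trace (Xᵀ * X) = 0) :
    X = 0 := by
  rw [trace_form'] at h
  ext j i
  have h1 : ∀ i ∈ Finset.univ, (0:ℝ) ≤ ∑ j, (X j i)^2 :=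
    fun i _ => Finset.sum_nonneg fun j _ => sq_nonneg _
  have h2 := (Finset.sum_eq_zero_iff_of_nonneg h1).mp h i (Finset.mem_univ i)
  have h3 := (Finset.sum_eq_zero_iff_of_nonneg
    (fun j _ => sq_nonneg (X j i))).mp h2 j (Finset.mem_univ j)
  simpa using sq_eq_zero_iff.mp h3

lemma conj_entry' (Wm X : Matrix (Fin n) (Fin n) ℝ) (i : Fin n) :
    (Wmᵀ * X * Wm) i i = (fun k => Wm k i) ⬝ᵥ (X *ᵥ (fun k => Wm k i)) := by
  simp only [mul_apply, mulVec, dotProduct, transpose_apply, Finset.sum_mul,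
    Finset.mul_sum]
  rw [Finset.sum_comm]
  exact Finset.sum_congr rfl fun k _ => Finset.sum_congr rfl fun l _ => by ring

end SVTHelpers

/-- The nuclear norm of a real square matrix: the sum of its singular values,
i.e. the square roots of the eigenvalues of `Bᴴ * B`. -/
noncomputable def nuclearNorm {n : ℕ} (B : Matrix (Fin n) (Fin n) ℝ) : ℝ :=
  ∑ i, Real.sqrt ((Matrix.isHermitian_conjTranspose_mul_self B).eigenvalues i)

section SVTMain

open scoped MatrixOrder

variable {n : ℕ}

lemma trace_sqrt' {M : Matrix (Fin n) (Fin n) ℝ} (hM : M.PosSemidef) :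
    (CFC.sqrt M).trace = ∑ i, Real.sqrt (hM.1.eigenvalues i) := by
  rw [CFC.sqrt_eq_cfc, cfc_nnreal_eq_real _ M hM.nonneg, hM.1.cfc_eq, IsHermitian.cfc,
    Unitary.conjStarAlgAut_apply, Matrix.trace_mul_cycle,
    Matrix.mem_unitaryGroup_iff'.mp (hM.1.eigenvectorUnitary).2, one_mul]
  simp [Matrix.trace_diagonal, fun i => max_eq_left (hM.eigenvalues_nonneg i)]

lemma nuclearNorm_decomp' {P Q : Matrix (Fin n) (Fin n) ℝ} (hP : Pᵀ * P = 1)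
    (hQ : Qᵀ * Q = 1) {d : Fin n → ℝ} (hd : ∀ i, 0 ≤ d i) :
    nuclearNorm (P * diagonal d * Qᵀ) = ∑ i, d i := by
  set B := P * diagonal d * Qᵀ with hB
  have hM : (Bᴴ * B).PosSemidef := posSemidef_conjTranspose_mul_self B
  have hBtB : Bᴴ * B = Q * diagonal (fun i => d i * d i) * Qᵀ := by
    rw [conj_transpose_real', hB]
    rw [transpose_mul, transpose_mul, transpose_transpose, diagonal_transpose]
    calc Q * (diagonal d * Pᵀ) * (P * diagonal d * Qᵀ)
        = Q * (diagonal d * (Pᵀ * P) * diagonal d) * Qᵀ := by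
          noncomm_ring
      _ = Q * diagonal (fun i => d i * d i) * Qᵀ := by
          rw [hP, mul_one, diagonal_mul_diagonal]
  have hC : (Q * diagonal d * Qᵀ).PosSemidef := by
    have := (Matrix.posSemidef_diagonal_iff.mpr hd).mul_mul_conjTranspose_same Q
    rwa [conj_transpose_real'] at this
  have hsq : (Q * diagonal d * Qᵀ) ^ 2 = Bᴴ * B := by
    rw [hBtB, pow_two]
    calc Q * diagonal d * Qᵀ * (Q * diagonal d * Qᵀ)
        = Q * (diagonal d * (Qᵀ * Q) * diagonal d) * Qᵀ := by noncomm_ring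
      _ = Q * diagonal (fun i => d i * d i) * Qᵀ := by
          rw [hQ, mul_one, diagonal_mul_diagonal]
  have hsqrt : Q * diagonal d * Qᵀ = CFC.sqrt (Bᴴ * B) :=
    (CFC.sqrt_unique (by rw [← pow_two]; exact hsq) hC.nonneg).symm
  have hnn : nuclearNorm B = (CFC.sqrt (Bᴴ * B)).trace := by
    rw [trace_sqrt' hM, nuclearNorm]
  rw [hnn, ← hsqrt, Matrix.trace_mul_cycle, hQ, one_mul, Matrix.trace_diagonal]

lemma trace_le_nuclearNorm' (B G : Matrix (Fin n) (Fin n) ℝ)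
    (hG : ∀ x : Fin n → ℝ, (G *ᵥ x) ⬝ᵥ (G *ᵥ x) ≤ x ⬝ᵥ x) :
    trace (Gᵀ * B) ≤ nuclearNorm B := by
  have hM : (Bᴴ * B).PosSemidef := posSemidef_conjTranspose_mul_self B
  set W : Matrix (Fin n) (Fin n) ℝ :=
    (hM.1.eigenvectorUnitary : Matrix (Fin n) (Fin n) ℝ) with hWdef
  have hW2 : W * star W = 1 := Matrix.mem_unitaryGroup_iff.mp (hM.1.eigenvectorUnitary).2
  have hWt : star W = Wᵀ := by
    rw [star_eq_conjTranspose, conj_transpose_real']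
  have key : trace (Gᵀ * B) = trace (Wᵀ * (Gᵀ * B) * W) := by
    rw [Matrix.trace_mul_cycle, ← mul_assoc, ← hWt, hW2, one_mul]
  rw [key, Matrix.trace, nuclearNorm]
  simp only [Matrix.diag_apply]
  apply Finset.sum_le_sum
  intro i _
  set w : Fin n → ℝ := fun k => W k i with hwdef
  have hweq : w = ⇑(hM.1.eigenvectorBasis i) := by
    funext k
    simp [hwdef, hWdef, Matrix.IsHermitian.eigenvectorUnitary_apply]
  have hww : w ⬝ᵥ w = 1 := by
    have h1 := hM.1.eigenvectorBasis.orthonormal.1 i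
    have h2 : (inner ℝ (hM.1.eigenvectorBasis i) (hM.1.eigenvectorBasis i) : ℝ) = 1 := by
      rw [real_inner_self_eq_norm_mul_norm, h1, mul_one]
    rw [hweq, ← h2]
    simp only [PiLp.inner_apply, RCLike.inner_apply, conj_trivial, dotProduct]
  have hBw : (B *ᵥ w) ⬝ᵥ (B *ᵥ w) = hM.1.eigenvalues i := by
    rw [dot_mulVec_self', ← conj_transpose_real', hweq,
      hM.1.mulVec_eigenvectorBasis, dotProduct_smul, smul_eq_mul, ← hweq, hww, mul_one]
  have hdiag : (Wᵀ * (Gᵀ * B) * W) i i = (G *ᵥ w) ⬝ᵥ (B *ᵥ w) := by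
    rw [conj_entry', ← hwdef, ← mulVec_mulVec,
      dotProduct_mulVec, vecMul_transpose]
  rw [hdiag]
  calc (G *ᵥ w) ⬝ᵥ (B *ᵥ w)
      ≤ Real.sqrt ((G *ᵥ w) ⬝ᵥ (G *ᵥ w)) * Real.sqrt ((B *ᵥ w) ⬝ᵥ (B *ᵥ w)) :=
        dot_le_sqrt' _ _
    _ ≤ 1 * Real.sqrt (hM.1.eigenvalues i) := by
        rw [hBw]
        refine mul_le_mul_of_nonneg_right ?_ (Real.sqrt_nonneg _)
        rw [show (1:ℝ) = Real.sqrt 1 by simp]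
        exact Real.sqrt_le_sqrt ((hG w).trans_eq hww)
    _ = Real.sqrt ((Matrix.isHermitian_conjTranspose_mul_self B).eigenvalues i) := by
        rw [one_mul]

end SVTMain

theorem stmt_19 (n : ℕ) (A : Matrix (Fin n) (Fin n) ℝ)
    (U V : Matrix (Fin n) (Fin n) ℝ) (σ : Fin n → ℝ) (hσ : ∀ i, 0 ≤ σ i)
    (hU : Uᵀ * U = 1) (hU' : U * Uᵀ = 1) (hV : Vᵀ * V = 1) (hV' : V * Vᵀ = 1)
    (hSVD : A = U * Matrix.diagonal σ * Vᵀ)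
    (τ : ℝ) (hτ : 0 < τ)
    (Θ : Matrix (Fin n) (Fin n) ℝ)
    (hΘ : Θ = U * Matrix.diagonal (fun i => max (σ i - τ) 0) * Vᵀ)
    (h : Matrix (Fin n) (Fin n) ℝ → ℝ)
    (hh : ∀ B, h B = τ * nuclearNorm B + 1 / 2 * Matrix.trace ((A - B)ᵀ * (A - B))) :
    (∀ B, h Θ ≤ h B) ∧ (∀ B, h B = h Θ → B = Θ) := by
  set θ : Fin n → ℝ := fun i => max (σ i - τ) 0 with hθdef
  set g : Fin n → ℝ := fun i => min (σ i) τ / τ with hgdef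
  have hg0 : ∀ i, 0 ≤ g i := fun i =>
    div_nonneg (le_min (hσ i) hτ.le) hτ.le
  have hg1 : ∀ i, g i ≤ 1 := fun i => by
    rw [hgdef, div_le_one hτ]; exact min_le_right _ _
  set G : Matrix (Fin n) (Fin n) ℝ := U * diagonal g * Vᵀ with hGdef
  -- G is a contraction
  have hGnorm : ∀ x : Fin n → ℝ, (G *ᵥ x) ⬝ᵥ (G *ᵥ x) ≤ x ⬝ᵥ x := by
    intro x
    have hVo : (Vᵀ)ᵀ * Vᵀ = 1 := by rw [transpose_transpose]; exact hV'
    rw [hGdef, ← mulVec_mulVec, ← mulVec_mulVec, dot_mulVec_orth' hU]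
    calc (diagonal g *ᵥ (Vᵀ *ᵥ x)) ⬝ᵥ (diagonal g *ᵥ (Vᵀ *ᵥ x))
        ≤ (Vᵀ *ᵥ x) ⬝ᵥ (Vᵀ *ᵥ x) := by
          simp only [dotProduct, mulVec_diagonal]
          apply Finset.sum_le_sum
          intro i _
          have hgg : g i * g i ≤ 1 :=
            mul_le_one₀ (hg1 i) (hg0 i) (hg1 i)
          nlinarith [mul_self_nonneg ((Vᵀ *ᵥ x) i)]
      _ = x ⬝ᵥ x := dot_mulVec_orth' hVo x
  -- A - Θ = τ • G
  have hστ : ∀ i, σ i - θ i = min (σ i) τ := by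
    intro i
    simp only [hθdef]
    rcases le_total (σ i) τ with hle | hle
    · rw [max_eq_right (by linarith), min_eq_left hle, sub_zero]
    · rw [max_eq_left (by linarith), min_eq_right hle]; ring
  have hentry : ∀ i, σ i - θ i = τ * g i := by
    intro i
    rw [hστ i, hgdef]
    rw [mul_comm, div_mul_cancel₀ _ hτ.ne']
  have hfun : (fun i => σ i - θ i) = τ • g := funext fun i => hentry i
  have hdg : diagonal σ - diagonal θ = τ • diagonal g := by
    rw [diagonal_sub]
    show diagonal (fun i => σ i - θ i) = _
    rw [hfun, diagonal_smul]
  have hAΘ : A - Θ = τ • G := by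
    rw [hSVD, hΘ, hGdef, ← sub_mul, ← Matrix.mul_sub, hdg, Matrix.mul_smul,
      Matrix.smul_mul]
  -- trace (Gᵀ Θ) = ∑ θ
  have hgθ : ∀ i, g i * θ i = θ i := by
    intro i
    rcases le_or_gt (σ i) τ with hle | hlt
    · have : θ i = 0 := max_eq_right (by linarith)
      rw [this, mul_zero]
    · have : g i = 1 := by
        rw [hgdef]; simp only
        rw [min_eq_right hlt.le, div_self hτ.ne']
      rw [this, one_mul]
  have hGΘ : trace (Gᵀ * Θ) = ∑ i, θ i := by
    rw [hGdef, hΘ, transpose_mul, transpose_mul, transpose_transpose,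
      diagonal_transpose]
    have : V * (diagonal g * Uᵀ) * (U * diagonal θ * Vᵀ)
        = V * diagonal (fun i => g i * θ i) * Vᵀ := by
      calc V * (diagonal g * Uᵀ) * (U * diagonal θ * Vᵀ)
          = V * (diagonal g * (Uᵀ * U) * diagonal θ) * Vᵀ := by noncomm_ring
        _ = V * diagonal (fun i => g i * θ i) * Vᵀ := by
            rw [hU, mul_one, diagonal_mul_diagonal]
    rw [this, Matrix.trace_mul_cycle, hV, one_mul, Matrix.trace_diagonal]
    exact Finset.sum_congr rfl fun i _ => hgθ i
  have hθ0 : ∀ i, 0 ≤ θ i := fun i => le_max_right _ _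
  have hNΘ : nuclearNorm Θ = ∑ i, θ i := by
    rw [hΘ]; exact nuclearNorm_decomp' hU hV hθ0
  -- key expansion
  have hkey : ∀ B, h B = h Θ + τ * (nuclearNorm B - trace (Gᵀ * B))
      + 1/2 * trace ((B - Θ)ᵀ * (B - Θ)) := by
    intro B
    rw [hh B, hh Θ]
    have e1 : A - B = (A - Θ) + (Θ - B) := by abel
    rw [e1, trace_expand']
    have e2 : trace ((A - Θ)ᵀ * (Θ - B)) = τ * (trace (Gᵀ * Θ) - trace (Gᵀ * B)) := by
      rw [hAΘ, transpose_smul, Matrix.smul_mul, trace_smul, smul_eq_mul,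
        Matrix.mul_sub, trace_sub]
    have e3 : trace ((Θ - B)ᵀ * (Θ - B)) = trace ((B - Θ)ᵀ * (B - Θ)) := by
      rw [show Θ - B = -(B - Θ) by abel, transpose_neg, neg_mul_neg]
    rw [e2, e3, hGΘ, hNΘ]
    ring
  constructor
  · intro B
    rw [hkey B]
    have h1 : 0 ≤ nuclearNorm B - trace (Gᵀ * B) :=
      sub_nonneg.mpr (trace_le_nuclearNorm' B G hGnorm)
    have h2 : 0 ≤ trace ((B - Θ)ᵀ * (B - Θ)) := trace_form_nonneg' _
    nlinarith
  · intro B hB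
    have hk := hkey B
    rw [hB] at hk
    have h1 : 0 ≤ nuclearNorm B - trace (Gᵀ * B) :=
      sub_nonneg.mpr (trace_le_nuclearNorm' B G hGnorm)
    have h2 : 0 ≤ trace ((B - Θ)ᵀ * (B - Θ)) := trace_form_nonneg' _
    have hT : trace ((B - Θ)ᵀ * (B - Θ)) = 0 := by nlinarith
    have := trace_form_eq_zero' hT
    rwa [sub_eq_zero] at this
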